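/- arXiv:1707.04038 — 2 statements merged into one kernel-verified Lean document; each statement's English description precedes it below -/
import Mathlib

section
/- Let (Ω, μ) be a measure space, let Φ_* ∈ (0, 1] and let Φ : Ω → ℝ be measurable with Φ_* ≤ Φ(x) ≤ Φ_*^{−1} for μ-almost every x. Let t_f > 0, let N ≥ 1 be an integer, set Δt = t_f/N, let Q ≥ 0, and let c_0, c_1, …, c_N ∈ L²(Ω) satisfy, for every n with 0 ≤ n ≤ N−1, the per-step energy inequality ∫_Ω Φ · ( (c_{n+1})² − (c_n)² ) / (2Δt) dμ ≤ Q · ‖(c_n + c_{n+1})/2‖_{L²(Ω)}. Then, for every ε > 0, ∫_Ω (c_N)² dμ ≤ (1/Φ_*²) ∫_Ω (c_0)² dμ + (t_f/(ε Φ_*)) Q² + (ε t_f/(Φ_* N)) Σ_{n=0}^{N} ∫_Ω (c_n)² dμ. -/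
open MeasureTheory

/-- Telescoped energy estimate underlying the L² stability proof of the Crank–Nicolson
HHO scheme: if the porosity `Φ` satisfies `Φ_* ≤ Φ ≤ Φ_*⁻¹` a.e. (`0 < Φ_* ≤ 1`),
`Δt = t_f/N`, and the discrete concentrations `c_0, …, c_N ∈ L²(Ω)` satisfy the
per-step energy inequality, then for every `ε > 0`,
`∫ c_N² ≤ (1/Φ_*²) ∫ c_0² + (t_f/(ε Φ_*)) Q² + (ε t_f/(Φ_* N)) Σ_{n=0}^N ∫ c_n²`. -/
theorem crank_nicolson_telescoped_energy_estimate
    {Ω : Type*} [MeasurableSpace Ω] (μ : Measure Ω)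
    (Φs : ℝ) (hΦs : Φs ∈ Set.Ioc (0 : ℝ) 1)
    (Φ : Ω → ℝ) (hΦmeas : Measurable Φ)
    (hΦbnd : ∀ᵐ x ∂μ, Φs ≤ Φ x ∧ Φ x ≤ Φs⁻¹)
    (tf : ℝ) (htf : 0 < tf) (N : ℕ) (hN : 1 ≤ N)
    (Q : ℝ) (hQ : 0 ≤ Q)
    (c : ℕ → Ω → ℝ) (hc : ∀ n ≤ N, MemLp (c n) 2 μ)
    (hstep : ∀ n < N,
      ∫ x, Φ x * ((c (n + 1) x) ^ 2 - (c n x) ^ 2) / (2 * (tf / N)) ∂μ ≤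
        Q * Real.sqrt (∫ x, ((c n x + c (n + 1) x) / 2) ^ 2 ∂μ)) :
    ∀ ε > 0,
      ∫ x, (c N x) ^ 2 ∂μ ≤
        (1 / Φs ^ 2) * ∫ x, (c 0 x) ^ 2 ∂μ + (tf / (ε * Φs)) * Q ^ 2 +
          (ε * tf / (Φs * N)) * ∑ n ∈ Finset.range (N + 1), ∫ x, (c n x) ^ 2 ∂μ := by
  intro ε hε
  obtain ⟨hΦpos, hΦle1⟩ := hΦs
  have hNpos : (0 : ℝ) < N := by exact_mod_cast hN
  have hNne : (N : ℝ) ≠ 0 := ne_of_gt hNpos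
  set Δt : ℝ := tf / N with hΔtdef
  have hΔt : 0 < Δt := div_pos htf hNpos
  set I : ℕ → ℝ := fun n => ∫ x, (c n x) ^ 2 ∂μ with hIdef
  set J : ℕ → ℝ := fun n => ∫ x, Φ x * (c n x) ^ 2 ∂μ with hJdef
  have hint : ∀ n ≤ N, Integrable (fun x => (c n x) ^ 2) μ := fun n hn =>
    (hc n hn).integrable_sq
  have hintΦ : ∀ n ≤ N, Integrable (fun x => Φ x * (c n x) ^ 2) μ := by
    intro n hn
    refine (hint n hn).bdd_mul (c := Φs⁻¹) hΦmeas.aestronglyMeasurable ?_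
    filter_upwards [hΦbnd] with x hx
    rw [Real.norm_eq_abs, abs_of_nonneg (le_trans hΦpos.le hx.1)]
    exact hx.2
  have hInonneg : ∀ n, 0 ≤ I n := fun n => integral_nonneg fun x => sq_nonneg _
  -- per-step estimate
  have hkey : ∀ n < N, J (n + 1) - J n ≤ Δt * Q ^ 2 / ε + Δt * ε * (I n + I (n + 1)) / 2 := by
    intro n hn
    have hn1 : n + 1 ≤ N := hn
    have hLHS : (∫ x, Φ x * ((c (n + 1) x) ^ 2 - (c n x) ^ 2) / (2 * Δt) ∂μ)
        = (J (n + 1) - J n) / (2 * Δt) := by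
      rw [integral_div]
      congr 1
      have : ∀ x : Ω, Φ x * ((c (n + 1) x) ^ 2 - (c n x) ^ 2)
          = Φ x * (c (n + 1) x) ^ 2 - Φ x * (c n x) ^ 2 := fun x => by ring
      simp_rw [this]
      exact integral_sub (hintΦ (n + 1) hn1) (hintΦ n hn.le)
    set S : ℝ := ∫ x, ((c n x + c (n + 1) x) / 2) ^ 2 ∂μ with hSdef
    have hS0 : 0 ≤ S := integral_nonneg fun x => sq_nonneg _
    have hmid : MemLp (fun x => (c n x + c (n + 1) x) / 2) 2 μ := by
      have := ((hc n hn.le).add (hc (n + 1) hn1)).const_mul (2⁻¹ : ℝ)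
      simpa [div_eq_inv_mul] using this
    have hSle : S ≤ (I n + I (n + 1)) / 2 := by
      have h2 : Integrable (fun x => ((c n x) ^ 2 + (c (n + 1) x) ^ 2) / 2) μ :=
        ((hint n hn.le).add (hint (n + 1) hn1)).div_const 2
      have h1 : Integrable (fun x => ((c n x + c (n + 1) x) / 2) ^ 2) μ := hmid.integrable_sq
      have hmono : S ≤ ∫ x, ((c n x) ^ 2 + (c (n + 1) x) ^ 2) / 2 ∂μ := by
        refine integral_mono h1 h2 fun x => ?_
        nlinarith [sq_nonneg (c n x - c (n + 1) x)]
      calc S ≤ ∫ x, ((c n x) ^ 2 + (c (n + 1) x) ^ 2) / 2 ∂μ := hmono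
        _ = (I n + I (n + 1)) / 2 := by
            rw [integral_div, integral_add (hint n hn.le) (hint (n + 1) hn1)]
    have hyoung : Q * Real.sqrt S ≤ Q ^ 2 / (2 * ε) + ε * S / 2 := by
      have h1 : 2 * ε * (Q * Real.sqrt S) ≤ Q ^ 2 + ε ^ 2 * S := by
        nlinarith [sq_nonneg (Q - ε * Real.sqrt S), Real.sq_sqrt hS0]
      have h2 : Q * Real.sqrt S ≤ (Q ^ 2 + ε ^ 2 * S) / (2 * ε) := by
        rw [le_div_iff₀ (by linarith)]
        linarith
      calc Q * Real.sqrt S ≤ (Q ^ 2 + ε ^ 2 * S) / (2 * ε) := h2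
        _ = Q ^ 2 / (2 * ε) + ε * S / 2 := by field_simp
    have hchain : (J (n + 1) - J n) / (2 * Δt)
        ≤ Q ^ 2 / (2 * ε) + ε * ((I n + I (n + 1)) / 2) / 2 := by
      calc (J (n + 1) - J n) / (2 * Δt)
          = ∫ x, Φ x * ((c (n + 1) x) ^ 2 - (c n x) ^ 2) / (2 * Δt) ∂μ := hLHS.symm
        _ ≤ Q * Real.sqrt S := hstep n hn
        _ ≤ Q ^ 2 / (2 * ε) + ε * S / 2 := hyoung
        _ ≤ Q ^ 2 / (2 * ε) + ε * ((I n + I (n + 1)) / 2) / 2 := by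
            have := mul_le_mul_of_nonneg_left hSle hε.le
            linarith
    have h2Δt : (0 : ℝ) < 2 * Δt := by linarith
    have := (div_le_iff₀ h2Δt).mp hchain
    calc J (n + 1) - J n
        ≤ (Q ^ 2 / (2 * ε) + ε * ((I n + I (n + 1)) / 2) / 2) * (2 * Δt) := this
      _ = Δt * Q ^ 2 / ε + Δt * ε * (I n + I (n + 1)) / 2 := by ring
  -- telescoping
  have htel : J N - J 0 ≤ N * (Δt * Q ^ 2 / ε)
      + Δt * ε / 2 * ∑ n ∈ Finset.range N, (I n + I (n + 1)) := by
    rw [← Finset.sum_range_sub (fun n => J n)]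
    calc (∑ n ∈ Finset.range N, (J (n + 1) - J n))
        ≤ ∑ n ∈ Finset.range N, (Δt * Q ^ 2 / ε + Δt * ε * (I n + I (n + 1)) / 2) :=
          Finset.sum_le_sum fun n hn => hkey n (Finset.mem_range.mp hn)
      _ = N * (Δt * Q ^ 2 / ε) + Δt * ε / 2 * ∑ n ∈ Finset.range N, (I n + I (n + 1)) := by
          rw [Finset.sum_add_distrib, Finset.sum_const, Finset.mul_sum, nsmul_eq_mul, Finset.card_range]
          congr 1
          exact Finset.sum_congr rfl fun n _ => by ring
  have hIsum : ∑ n ∈ Finset.range N, (I n + I (n + 1))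
      ≤ 2 * ∑ n ∈ Finset.range (N + 1), I n := by
    rw [Finset.sum_add_distrib]
    have h1 : ∑ n ∈ Finset.range N, I n ≤ ∑ n ∈ Finset.range (N + 1), I n :=
      Finset.sum_le_sum_of_subset_of_nonneg
        (Finset.range_subset_range.mpr (Nat.le_succ N)) (fun n _ _ => hInonneg n)
    have h2 : ∑ n ∈ Finset.range (N + 1), I n
        = (∑ n ∈ Finset.range N, I (n + 1)) + I 0 := Finset.sum_range_succ' I N
    have := hInonneg 0
    linarith
  -- comparisons with Φ
  have hJN : Φs * I N ≤ J N := by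
    have h1 : ∫ x, Φs * (c N x) ^ 2 ∂μ ≤ J N := by
      refine integral_mono_ae ((hint N le_rfl).const_mul Φs) (hintΦ N le_rfl) ?_
      filter_upwards [hΦbnd] with x hx
      exact mul_le_mul_of_nonneg_right hx.1 (sq_nonneg _)
    rwa [integral_const_mul] at h1
  have hJ0 : J 0 ≤ Φs⁻¹ * I 0 := by
    have h1 : J 0 ≤ ∫ x, Φs⁻¹ * (c 0 x) ^ 2 ∂μ := by
      refine integral_mono_ae (hintΦ 0 (Nat.zero_le N)) ((hint 0 (Nat.zero_le N)).const_mul _) ?_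
      filter_upwards [hΦbnd] with x hx
      exact mul_le_mul_of_nonneg_right hx.2 (sq_nonneg _)
    rwa [integral_const_mul] at h1
  have hNΔt : (N : ℝ) * Δt = tf := by rw [hΔtdef]; field_simp
  set Ssum : ℝ := ∑ n ∈ Finset.range (N + 1), I n with hSsumdef
  have hchain : Φs * I N ≤ Φs⁻¹ * I 0 + tf * Q ^ 2 / ε + Δt * ε * Ssum := by
    have h3 : Δt * ε / 2 * ∑ n ∈ Finset.range N, (I n + I (n + 1)) ≤ Δt * ε * Ssum := by
      have := mul_le_mul_of_nonneg_left hIsum (by positivity : (0:ℝ) ≤ Δt * ε / 2)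
      linarith
    have h4 : (N : ℝ) * (Δt * Q ^ 2 / ε) = tf * Q ^ 2 / ε := by
      rw [← hNΔt]; ring
    linarith
  have hεne : ε ≠ 0 := ne_of_gt hε
  have hΦne : Φs ≠ 0 := ne_of_gt hΦpos
  calc I N = Φs⁻¹ * (Φs * I N) := by rw [← mul_assoc, inv_mul_cancel₀ hΦne, one_mul]
    _ ≤ Φs⁻¹ * (Φs⁻¹ * I 0 + tf * Q ^ 2 / ε + Δt * ε * Ssum) :=
        mul_le_mul_of_nonneg_left hchain (inv_nonneg.mpr hΦpos.le)
    _ = (1 / Φs ^ 2) * I 0 + (tf / (ε * Φs)) * Q ^ 2 + (ε * tf / (Φs * N)) * Ssum := by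
        rw [hΔtdef]; field_simp
end

section
/- Let (Ω, μ) be a measure space, let Φ_* ∈ (0, 1] and let Φ : Ω → ℝ be measurable with Φ_* ≤ Φ(x) ≤ Φ_*^{−1} for μ-almost every x. Let t_f > 0, let N ≥ 1 be an integer, set Δt = t_f/N, let Q ≥ 0, and let c_0, c_1, …, c_N ∈ L²(Ω) satisfy, for every n with 0 ≤ n ≤ N−1, the per-step energy inequality ∫_Ω Φ · ( (c_{n+1})² − (c_n)² ) / (2Δt) dμ ≤ Q · ‖(c_n + c_{n+1})/2‖_{L²(Ω)}. Then for every n with 0 ≤ n ≤ N, ‖c_n‖²_{L²(Ω)} ≤ (e²/Φ_*²) ( ‖c_0‖²_{L²(Ω)} + 2 t_f² Q² ). -/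
open MeasureTheory

section Helpers
variable {Ω : Type*} [MeasurableSpace Ω] {μ : Measure Ω}

private lemma integral_sq_Lp' (F : Lp ℝ 2 μ) : ∫ x, (F x)^2 ∂μ = ‖F‖^2 := by
  have h := L2.inner_def (𝕜 := ℝ) F F
  simp only [RCLike.inner_apply, starRingEnd_apply, star_trivial] at h
  rw [real_inner_self_eq_norm_sq] at h
  rw [h]
  exact integral_congr_ae (Filter.Eventually.of_forall fun x => sq (F x))

private lemma sqrt_integral_sq' {u : Ω → ℝ} (hu : MemLp u 2 μ) :
    Real.sqrt (∫ x, (u x)^2 ∂μ) = ‖hu.toLp u‖ := by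
  have h1 : ∫ x, (u x)^2 ∂μ = ∫ x, ((hu.toLp u : Ω → ℝ) x)^2 ∂μ := by
    refine integral_congr_ae ?_
    filter_upwards [hu.coeFn_toLp] with x hx
    rw [hx]
  rw [h1, integral_sq_Lp', Real.sqrt_sq (norm_nonneg _)]

private lemma minkowski_half' {u v : Ω → ℝ} (hu : MemLp u 2 μ) (hv : MemLp v 2 μ) :
    Real.sqrt (∫ x, ((u x + v x)/2)^2 ∂μ) ≤
      (Real.sqrt (∫ x, (u x)^2 ∂μ) + Real.sqrt (∫ x, (v x)^2 ∂μ))/2 := by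
  have hw : MemLp (fun x => (u x + v x)/2) 2 μ := by
    have h := (hu.add hv).const_mul (2:ℝ)⁻¹
    simpa [div_eq_inv_mul] using h
  rw [sqrt_integral_sq' hw, sqrt_integral_sq' hu, sqrt_integral_sq' hv]
  have heq : hw.toLp _ = (2:ℝ)⁻¹ • (hu.toLp u + hv.toLp v) := by
    apply Lp.ext
    filter_upwards [hw.coeFn_toLp, hu.coeFn_toLp, hv.coeFn_toLp,
      Lp.coeFn_smul ((2:ℝ)⁻¹) (hu.toLp u + hv.toLp v),
      Lp.coeFn_add (hu.toLp u) (hv.toLp v)] with x h0 h1 h2 h3 h4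
    rw [h0, h3]
    simp only [Pi.smul_apply, h4, Pi.add_apply, h1, h2, smul_eq_mul]
    ring
  rw [heq, norm_smul]
  simp only [norm_inv, Real.norm_ofNat]
  linarith [norm_add_le (hu.toLp u) (hv.toLp v)]

end Helpers

set_option maxHeartbeats 1000000 in
/-- Abstract form of the L² stability estimate of Theorem 3.2 for the Crank–Nicolson
HHO scheme: under the per-step energy inequality with porosity bounds
`Φ_* ≤ Φ ≤ Φ_*⁻¹` (`0 < Φ_* ≤ 1`) and `Δt = t_f/N`, one has for every `0 ≤ n ≤ N`
`‖c_n‖²_{L²} ≤ (e²/Φ_*²) (‖c_0‖²_{L²} + 2 t_f² Q²)`. -/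
theorem crank_nicolson_L2_stability
    {Ω : Type*} [MeasurableSpace Ω] (μ : Measure Ω)
    (Φs : ℝ) (hΦs : Φs ∈ Set.Ioc (0 : ℝ) 1)
    (Φ : Ω → ℝ) (hΦmeas : Measurable Φ)
    (hΦbnd : ∀ᵐ x ∂μ, Φs ≤ Φ x ∧ Φ x ≤ Φs⁻¹)
    (tf : ℝ) (htf : 0 < tf) (N : ℕ) (hN : 1 ≤ N)
    (Q : ℝ) (hQ : 0 ≤ Q)
    (c : ℕ → Ω → ℝ) (hc : ∀ n ≤ N, MemLp (c n) 2 μ)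
    (hstep : ∀ n < N,
      ∫ x, Φ x * ((c (n + 1) x) ^ 2 - (c n x) ^ 2) / (2 * (tf / N)) ∂μ ≤
        Q * Real.sqrt (∫ x, ((c n x + c (n + 1) x) / 2) ^ 2 ∂μ)) :
    ∀ n ≤ N,
      ∫ x, (c n x) ^ 2 ∂μ ≤
        (Real.exp 1 ^ 2 / Φs ^ 2) *
          ((∫ x, (c 0 x) ^ 2 ∂μ) + 2 * tf ^ 2 * Q ^ 2) := by
  obtain ⟨hΦs0, hΦs1⟩ := hΦs
  have hNpos : (0:ℝ) < N := by exact_mod_cast Nat.lt_of_lt_of_le Nat.zero_lt_one hN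
  set Δt : ℝ := tf / N with hΔtdef
  have hΔt : 0 < Δt := div_pos htf hNpos
  set X : ℕ → ℝ := fun n => ∫ x, (c n x)^2 ∂μ with hXdef
  set A : ℕ → ℝ := fun n => ∫ x, Φ x * (c n x)^2 ∂μ with hAdef
  set K : ℝ := Q / Real.sqrt Φs with hKdef
  have hK : 0 ≤ K := div_nonneg hQ (Real.sqrt_nonneg _)
  have hXnn : ∀ n, 0 ≤ X n := fun n => integral_nonneg fun x => sq_nonneg _
  have hint : ∀ n ≤ N, Integrable (fun x => (c n x)^2) μ :=
    fun n hn => (hc n hn).integrable_sq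
  have hintΦ : ∀ n ≤ N, Integrable (fun x => Φ x * (c n x)^2) μ := by
    intro n hn
    refine Integrable.mono' ((hint n hn).const_mul Φs⁻¹) ?_ ?_
    · exact (hΦmeas.aestronglyMeasurable.mul (hint n hn).aestronglyMeasurable)
    · filter_upwards [hΦbnd] with x hx
      obtain ⟨h1, h2⟩ := hx
      have h0 : (0:ℝ) ≤ Φ x := le_trans hΦs0.le h1
      rw [Real.norm_eq_abs, abs_of_nonneg (mul_nonneg h0 (sq_nonneg _))]
      exact mul_le_mul_of_nonneg_right h2 (sq_nonneg _)
  have hlow : ∀ n ≤ N, Φs * X n ≤ A n := by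
    intro n hn
    have h : ∫ x, Φs * (c n x)^2 ∂μ ≤ A n := by
      refine integral_mono_ae ((hint n hn).const_mul Φs) (hintΦ n hn) ?_
      filter_upwards [hΦbnd] with x hx
      exact mul_le_mul_of_nonneg_right hx.1 (sq_nonneg _)
    rwa [integral_const_mul] at h
  have hup : ∀ n ≤ N, A n ≤ Φs⁻¹ * X n := by
    intro n hn
    have h : A n ≤ ∫ x, Φs⁻¹ * (c n x)^2 ∂μ := by
      refine integral_mono_ae (hintΦ n hn) ((hint n hn).const_mul Φs⁻¹) ?_
      filter_upwards [hΦbnd] with x hx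
      exact mul_le_mul_of_nonneg_right hx.2 (sq_nonneg _)
    rwa [integral_const_mul] at h
  have hAnn : ∀ n ≤ N, 0 ≤ A n :=
    fun n hn => le_trans (mul_nonneg hΦs0.le (hXnn n)) (hlow n hn)
  have hsΦ : (0:ℝ) < Real.sqrt Φs := Real.sqrt_pos.mpr hΦs0
  have hXle : ∀ n ≤ N, Real.sqrt (X n) ≤ Real.sqrt (A n) / Real.sqrt Φs := by
    intro n hn
    rw [← Real.sqrt_div (hAnn n hn)]
    exact Real.sqrt_le_sqrt ((le_div_iff₀ hΦs0).mpr (by linarith [hlow n hn]))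
  -- step inequality in terms of A
  have hstepA : ∀ n < N, A (n+1) - A n ≤ Δt * K * (Real.sqrt (A n) + Real.sqrt (A (n+1))) := by
    intro n hn
    have hn1 : n + 1 ≤ N := hn
    have hn0 : n ≤ N := le_of_lt hn
    have hLHS : ∫ x, Φ x * ((c (n + 1) x) ^ 2 - (c n x) ^ 2) / (2 * Δt) ∂μ
        = (A (n+1) - A n) / (2 * Δt) := by
      simp_rw [mul_sub]
      rw [integral_div, integral_sub (hintΦ (n+1) hn1) (hintΦ n hn0)]
    have h1 := hstep n hn
    rw [hLHS] at h1
    have hmid : Real.sqrt (∫ x, ((c n x + c (n + 1) x) / 2) ^ 2 ∂μ)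
        ≤ (Real.sqrt (X n) + Real.sqrt (X (n+1))) / 2 :=
      minkowski_half' (hc n hn0) (hc (n+1) hn1)
    have h2 : (A (n+1) - A n) / (2 * Δt)
        ≤ Q * ((Real.sqrt (A n) / Real.sqrt Φs + Real.sqrt (A (n+1)) / Real.sqrt Φs) / 2) := by
      refine le_trans h1 ?_
      refine mul_le_mul_of_nonneg_left ?_ hQ
      refine le_trans hmid ?_
      have := hXle n hn0
      have := hXle (n+1) hn1
      linarith
    rw [div_le_iff₀ (by positivity)] at h2
    have hexp : Q * ((Real.sqrt (A n) / Real.sqrt Φs + Real.sqrt (A (n+1)) / Real.sqrt Φs) / 2)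
        * (2 * Δt) = Δt * K * (Real.sqrt (A n) + Real.sqrt (A (n+1))) := by
      rw [hKdef]; field_simp
    rw [hexp] at h2
    exact h2
  -- square-root step
  have hsqrtstep : ∀ n < N, Real.sqrt (A (n+1)) ≤ Real.sqrt (A n) + Δt * K := by
    intro n hn
    by_cases hcase : A (n+1) ≤ A n
    · refine le_trans (Real.sqrt_le_sqrt hcase) ?_
      nlinarith [mul_nonneg hΔt.le hK]
    · push_neg at hcase
      have hA1pos : 0 < A (n+1) := lt_of_le_of_lt (hAnn n hn.le) hcase
      have hs : 0 < Real.sqrt (A n) + Real.sqrt (A (n+1)) :=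
        add_pos_of_nonneg_of_pos (Real.sqrt_nonneg _) (Real.sqrt_pos.mpr hA1pos)
      have hfact : A (n+1) - A n
          = (Real.sqrt (A (n+1)) - Real.sqrt (A n)) * (Real.sqrt (A (n+1)) + Real.sqrt (A n)) := by
        have e1 : Real.sqrt (A (n+1)) ^ 2 = A (n+1) := Real.sq_sqrt hA1pos.le
        have e2 : Real.sqrt (A n) ^ 2 = A n := Real.sq_sqrt (hAnn n hn.le)
        nlinarith [e1, e2]
      have h1 := hstepA n hn
      nlinarith [h1, hfact, hs]
  -- induction
  have hsqrtA : ∀ n, n ≤ N → Real.sqrt (A n) ≤ Real.sqrt (A 0) + n * Δt * K := by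
    intro n
    induction n with
    | zero => intro _; simp
    | succ m ih =>
      intro hm
      have hmN : m < N := hm
      have h1 := hsqrtstep m hmN
      have h2 := ih hmN.le
      push_cast
      linarith
  -- conclude
  intro n hn
  have hA0 : Φs * A 0 ≤ X 0 := by
    have := hup 0 (le_trans (Nat.zero_le 1) hN)
    have h := mul_le_mul_of_nonneg_left this hΦs0.le
    rwa [mul_inv_cancel_left₀ (ne_of_gt hΦs0)] at h
  have hbound : Real.sqrt (A n) ≤ Real.sqrt (A 0) + tf * K := by
    refine le_trans (hsqrtA n hn) ?_
    have hnN : (n:ℝ) ≤ N := by exact_mod_cast hn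
    have : (n:ℝ) * Δt ≤ (N:ℝ) * Δt := mul_le_mul_of_nonneg_right hnN hΔt.le
    have hNΔt : (N:ℝ) * Δt = tf := by
      rw [hΔtdef]; field_simp
    nlinarith [hK]
  have hAn : A n ≤ (Real.sqrt (A 0) + tf * K)^2 := by
    have e1 : Real.sqrt (A n) ^ 2 = A n := Real.sq_sqrt (hAnn n hn)
    nlinarith [hbound, Real.sqrt_nonneg (A n), Real.sqrt_nonneg (A 0),
      mul_nonneg htf.le hK]
  have hsA0 : Real.sqrt (A 0) ^ 2 = A 0 := Real.sq_sqrt (hAnn 0 (le_trans (Nat.zero_le 1) hN))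
  have hK2 : Φs * K^2 = Q^2 := by
    rw [hKdef, div_pow, Real.sq_sqrt hΦs0.le]
    field_simp
  have he : (2:ℝ) ≤ Real.exp 1 := by linarith [Real.add_one_le_exp (1:ℝ)]
  -- reduce goal
  show X n ≤ (Real.exp 1 ^ 2 / Φs ^ 2) * (X 0 + 2 * tf ^ 2 * Q ^ 2)
  rw [div_mul_eq_mul_div, le_div_iff₀ (by positivity)]
  have key : X n * Φs ^ 2 ≤ 2 * X 0 + 2 * tf^2 * Q^2 := by
    have h1 : X n * Φs ^ 2 ≤ Φs * A n := by
      nlinarith [hlow n hn, hΦs0.le, mul_nonneg hΦs0.le (sub_nonneg.mpr (hlow n hn))]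
    have h2 : Φs * A n ≤ Φs * (Real.sqrt (A 0) + tf * K)^2 :=
      mul_le_mul_of_nonneg_left hAn hΦs0.le
    have e1 : Φs * Real.sqrt (A 0)^2 = Φs * A 0 := by rw [hsA0]
    have e2 : Φs * (tf*K)^2 = tf^2 * Q^2 := by rw [mul_pow, ← hK2]; ring
    have h3 : Φs * (Real.sqrt (A 0) + tf * K)^2 ≤ 2 * X 0 + 2 * tf^2 * Q^2 := by
      nlinarith [mul_nonneg hΦs0.le (sq_nonneg (Real.sqrt (A 0) - tf * K)), e1, e2, hA0]
    linarith
  have he2 : (4:ℝ) ≤ Real.exp 1 ^ 2 := by nlinarith [he]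
  have hnn : (0:ℝ) ≤ X 0 + 2 * tf^2 * Q^2 := by positivity
  have hfin : 4 * (X 0 + 2 * tf^2 * Q^2) ≤ Real.exp 1 ^ 2 * (X 0 + 2 * tf^2 * Q^2) :=
    mul_le_mul_of_nonneg_right he2 hnn
  linarith [key, hfin, hXnn 0, mul_nonneg (sq_nonneg tf) (sq_nonneg Q)]
end
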